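/- Let X be a set, I a nonempty finite set, and (f_i)_{i∈I} a family of functions f_i : X → X having attractor A. If α, β ∈ Λ(I) satisfy a_α ≠ a_β, then there exists n₀ ∈ ℕ such that X̃_{[α]_{n₀}} ∩ X̃_{[β]_{n₀}} = ∅, where X̃_γ = X_γ ∪ Y_γ for every finite word γ. -/

import Mathlib

open Filter Topology Set

/-- `φ : [0,∞) → [0,∞)` is a comparison function: it maps `[0,∞)` into `[0,∞)`,
is increasing, satisfies `φ t < t` for `t > 0`, and is right-continuous. -/
def IsComparisonFn (φ : ℝ → ℝ) : Prop :=
  (∀ t : ℝ, 0 ≤ t → 0 ≤ φ t) ∧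
  MonotoneOn φ (Set.Ici (0 : ℝ)) ∧
  (∀ t : ℝ, 0 < t → φ t < t) ∧
  (∀ t : ℝ, 0 ≤ t → ContinuousWithinAt φ (Set.Ici t) t)

/-- `f_{α₁…αₙ} = f_{α₁} ∘ f_{α₂} ∘ … ∘ f_{αₙ}` (the identity for the empty word). -/
def WordMap {X I : Type*} (f : I → X → X) : List I → X → X
  | [] => id
  | i :: w => f i ∘ WordMap f w

/-- `[α]_n`: the finite word consisting of the first `n` letters of the infinite word `α`. -/
def Pref {I : Type*} (α : ℕ → I) (n : ℕ) : List I := List.ofFn (fun k : Fin n => α (k : ℕ))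

/-- `X_w = f_w(X)`, the image of the whole space under the word map. -/
def WordSet {X I : Type*} (f : I → X → X) (w : List I) : Set X := Set.range (WordMap f w)

/-- A family `(f_i)_{i ∈ I}` of self-maps of `X` has attractor if:
(a) for every infinite word `α`, `⋂ₙ X_{[α]ₙ}` has a unique element `a_α`;
(b) whenever `a_α ≠ a_β`, some `X_{[α]_{n₀}}` and `X_{[β]_{n₀}}` are disjoint. -/
def HasAttractor {X I : Type*} (f : I → X → X) : Prop :=
  (∀ α : ℕ → I, ∃! a : X, ∀ n : ℕ, a ∈ WordSet f (Pref α n)) ∧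
  (∀ α β : ℕ → I, ∀ a b : X,
    (∀ n : ℕ, a ∈ WordSet f (Pref α n)) → (∀ n : ℕ, b ∈ WordSet f (Pref β n)) →
    a ≠ b →
    ∃ n₀ : ℕ, WordSet f (Pref α n₀) ∩ WordSet f (Pref β n₀) = ∅)

/-- Given a selection `a` of the points `a_β`,
`Y_w = {a_β : β ∈ Λ(I), X_w ∩ X_{[β]ₙ} ≠ ∅ for every n}`. -/
def YSet {X I : Type*} (f : I → X → X) (a : (ℕ → I) → X) (w : List I) : Set X :=
  {y | ∃ β : ℕ → I, y = a β ∧ ∀ n : ℕ, (WordSet f w ∩ WordSet f (Pref β n)).Nonempty}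

/-- `X̃_w = X_w ∪ Y_w`. -/
def XtSet {X I : Type*} (f : I → X → X) (a : (ℕ → I) → X) (w : List I) : Set X :=
  WordSet f w ∪ YSet f a w

private lemma wordMap_append {X I : Type*} (f : I → X → X) (u v : List I) :
    WordMap f (u ++ v) = WordMap f u ∘ WordMap f v := by
  induction u with
  | nil => rfl
  | cons i w ih => simp [WordMap, ih, Function.comp_assoc]

private lemma pref_le_append {I : Type*} (α : ℕ → I) {n n' : ℕ} (h : n ≤ n') :
    ∃ v : List I, Pref α n' = Pref α n ++ v := by
  obtain ⟨m, rfl⟩ := Nat.exists_eq_add_of_le h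
  exact ⟨List.ofFn (fun j : Fin m => α (n + j)),
    by simp [Pref, List.ofFn_add]⟩

private lemma wordSet_anti {X I : Type*} (f : I → X → X) (α : ℕ → I) {n n' : ℕ} (h : n ≤ n') :
    WordSet f (Pref α n') ⊆ WordSet f (Pref α n) := by
  obtain ⟨v, hv⟩ := pref_le_append α h
  rw [hv, WordSet, wordMap_append]
  rintro x ⟨y, rfl⟩
  exact ⟨WordMap f v y, rfl⟩

private lemma ultra_const {C : Type*} [Finite C] (U : Ultrafilter ℕ) (x : ℕ → C) :
    ∃ c : C, ∀ᶠ n in (U : Filter ℕ), x n = c := by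
  by_contra h
  push_neg at h
  have h2 : ∀ᶠ n in (U : Filter ℕ), ∀ c : C, x n ≠ c :=
    Filter.eventually_all.2 fun c => h c
  obtain ⟨n, hn⟩ := h2.exists
  exact hn (x n) rfl

private lemma pref_eq_of_agree {I : Type*} {α β : ℕ → I} {L : ℕ}
    (h : ∀ k : Fin L, α (k : ℕ) = β (k : ℕ)) : Pref α L = Pref β L := by
  unfold Pref
  congr 1
  funext k
  exact h k

/-- **Proposition 3.7 d).** If `a_α ≠ a_β`, then `X̃_{[α]_{n₀}} ∩ X̃_{[β]_{n₀}} = ∅`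
for some `n₀ ∈ ℕ`. -/
theorem XtSet_separation {X I : Type*} [Finite I] [Nonempty I]
    (f : I → X → X) (hF : HasAttractor f)
    (a : (ℕ → I) → X) (ha : ∀ (α : ℕ → I) (n : ℕ), a α ∈ WordSet f (Pref α n)) :
    ∀ α β : ℕ → I, a α ≠ a β →
      ∃ n₀ : ℕ, XtSet f a (Pref α n₀) ∩ XtSet f a (Pref β n₀) = ∅ := by
  intro α β hne
  by_contra hcon
  push_neg at hcon
  have hcon' : ∀ n, (XtSet f a (Pref α n) ∩ XtSet f a (Pref β n)).Nonempty :=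
    hcon
  obtain ⟨n₁, hn₁⟩ := hF.2 α β (a α) (a β) (ha α) (ha β) hne
  -- extract witness words at every level
  have hdata : ∀ n : ℕ, ∃ γ δ : ℕ → I, a γ = a δ ∧
      (∀ k, (WordSet f (Pref α n) ∩ WordSet f (Pref γ k)).Nonempty) ∧
      (∀ k, (WordSet f (Pref β n) ∩ WordSet f (Pref δ k)).Nonempty) := by
    intro n
    obtain ⟨z, hzα, hzβ⟩ := hcon' (n₁ + n)
    have hα1 : WordSet f (Pref α (n₁ + n)) ⊆ WordSet f (Pref α n₁) :=
      wordSet_anti f α (Nat.le_add_right _ _)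
    have hβ1 : WordSet f (Pref β (n₁ + n)) ⊆ WordSet f (Pref β n₁) :=
      wordSet_anti f β (Nat.le_add_right _ _)
    have hαn : WordSet f (Pref α (n₁ + n)) ⊆ WordSet f (Pref α n) :=
      wordSet_anti f α (Nat.le_add_left _ _)
    have hβn : WordSet f (Pref β (n₁ + n)) ⊆ WordSet f (Pref β n) :=
      wordSet_anti f β (Nat.le_add_left _ _)
    rcases hzα with hzα | ⟨γ, rfl, hγ⟩
    · rcases hzβ with hzβ | ⟨δ, rfl, hδ⟩
      · exact absurd (Set.ext_iff.1 hn₁ z) (by simp [hα1 hzα, hβ1 hzβ])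
      · refine ⟨δ, δ, rfl, fun k => ⟨a δ, hαn hzα, ha δ k⟩, fun k => ?_⟩
        obtain ⟨y, hy1, hy2⟩ := hδ k
        exact ⟨y, hβn hy1, hy2⟩
    · rcases hzβ with hzβ | ⟨δ, hzδ, hδ⟩
      · refine ⟨γ, γ, rfl, fun k => ?_, fun k => ⟨a γ, hβn hzβ, ha γ k⟩⟩
        obtain ⟨y, hy1, hy2⟩ := hγ k
        exact ⟨y, hαn hy1, hy2⟩
      · refine ⟨γ, δ, hzδ, fun k => ?_, fun k => ?_⟩
        · obtain ⟨y, hy1, hy2⟩ := hγ k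
          exact ⟨y, hαn hy1, hy2⟩
        · obtain ⟨y, hy1, hy2⟩ := hδ k
          exact ⟨y, hβn hy1, hy2⟩
  choose γ δ hgd hga hgb using hdata
  -- ultrafilter limit words
  let U : Ultrafilter ℕ := Ultrafilter.of Filter.atTop
  have hUtop : (U : Filter ℕ) ≤ Filter.atTop := Ultrafilter.of_le _
  choose Γ hΓ using fun k => ultra_const U (fun n => γ n k)
  choose Δ hΔ using fun k => ultra_const U (fun n => δ n k)
  have key : ∀ L N : ℕ, ∃ n, N ≤ n ∧
      Pref (γ n) L = Pref Γ L ∧ Pref (δ n) L = Pref Δ L := by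
    intro L N
    have h1 : ∀ᶠ n in (U : Filter ℕ), ∀ k : Fin L, γ n (k : ℕ) = Γ (k : ℕ) :=
      Filter.eventually_all.2 fun k => hΓ (k : ℕ)
    have h2 : ∀ᶠ n in (U : Filter ℕ), ∀ k : Fin L, δ n (k : ℕ) = Δ (k : ℕ) :=
      Filter.eventually_all.2 fun k => hΔ (k : ℕ)
    have h3 : ∀ᶠ n in (U : Filter ℕ), N ≤ n := hUtop (Filter.eventually_ge_atTop N)
    obtain ⟨n, ⟨hn1, hn2⟩, hn3⟩ := ((h1.and h2).and h3).exists
    exact ⟨n, hn3, pref_eq_of_agree hn1, pref_eq_of_agree hn2⟩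
  -- (1) X_{α,n} meets every Γ-cylinder
  have hA : ∀ n L : ℕ, (WordSet f (Pref α n) ∩ WordSet f (Pref Γ L)).Nonempty := by
    intro n L
    obtain ⟨n', hn', hΓn', -⟩ := key L n
    obtain ⟨y, hy1, hy2⟩ := hga n' L
    exact ⟨y, wordSet_anti f α hn' hy1, hΓn' ▸ hy2⟩
  have hB : ∀ n L : ℕ, (WordSet f (Pref β n) ∩ WordSet f (Pref Δ L)).Nonempty := by
    intro n L
    obtain ⟨n', hn', -, hΔn'⟩ := key L n
    obtain ⟨y, hy1, hy2⟩ := hgb n' L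
    exact ⟨y, wordSet_anti f β hn' hy1, hΔn' ▸ hy2⟩
  -- (2) a Γ = a α
  have hΓα : a Γ = a α := by
    by_contra h
    obtain ⟨m, hm⟩ := hF.2 Γ α (a Γ) (a α) (ha Γ) (ha α) h
    obtain ⟨y, hy1, hy2⟩ := hA m m
    exact absurd (Set.ext_iff.1 hm y) (by simp [hy1, hy2])
  have hΔβ : a Δ = a β := by
    by_contra h
    obtain ⟨m, hm⟩ := hF.2 Δ β (a Δ) (a β) (ha Δ) (ha β) h
    obtain ⟨y, hy1, hy2⟩ := hB m m
    exact absurd (Set.ext_iff.1 hm y) (by simp [hy1, hy2])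
  -- (3) a Γ = a Δ
  have hΓΔ : a Γ = a Δ := by
    by_contra h
    obtain ⟨m, hm⟩ := hF.2 Γ Δ (a Γ) (a Δ) (ha Γ) (ha Δ) h
    obtain ⟨n, -, hΓn, hΔn⟩ := key m 0
    have h1 : a (γ n) ∈ WordSet f (Pref Γ m) := hΓn ▸ ha (γ n) m
    have h2 : a (γ n) ∈ WordSet f (Pref Δ m) := by
      rw [hgd n]; exact hΔn ▸ ha (δ n) m
    exact absurd (Set.ext_iff.1 hm (a (γ n))) (by simp [h1, h2])
  exact hne ((hΓα.symm.trans hΓΔ).trans hΔβ)
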